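/- Square-root Lyapunov drift step: Let d ≥ 1, let q ∈ ℝ^d with ‖q‖₂ ≥ θ for some θ > 0, let β ≥ 0 and C ≥ 0, and let Y be a random vector in ℝ^d with E[‖Y‖₂²] ≤ ‖q‖₂² − 2β·‖q‖₁ + 2C. Then E[‖Y‖₂] ≤ ‖q‖₂ − β + C/θ. -/

import Mathlib

open MeasureTheory

/-- **Square-root Lyapunov drift step.** Let `d ≥ 1`, `q ∈ ℝ^d` with `‖q‖₂ ≥ θ > 0`,
`β ≥ 0`, `C ≥ 0`, and let `Y` be a random vector in `ℝ^d` with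
`E[‖Y‖₂²] ≤ ‖q‖₂² - 2β‖q‖₁ + 2C`.  Then `E[‖Y‖₂] ≤ ‖q‖₂ - β + C/θ`. -/
theorem sqrt_lyapunov_drift_step {d : ℕ} (hd : 1 ≤ d)
    {Ω : Type*} [MeasurableSpace Ω] (μ : Measure Ω) [IsProbabilityMeasure μ]
    (q : EuclideanSpace ℝ (Fin d)) (θ β C : ℝ)
    (hθ : 0 < θ) (hq : θ ≤ ‖q‖) (hβ : 0 ≤ β) (hC : 0 ≤ C)
    (Y : Ω → EuclideanSpace ℝ (Fin d)) (hYmeas : Measurable Y)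
    (hYint : Integrable (fun ω : Ω => ‖Y ω‖ ^ 2) μ)
    (hdrift : ∫ ω, ‖Y ω‖ ^ 2 ∂μ ≤ ‖q‖ ^ 2 - 2 * β * (∑ i, |q i|) + 2 * C) :
    ∫ ω, ‖Y ω‖ ∂μ ≤ ‖q‖ - β + C / θ := by
  set f : Ω → ℝ := fun ω => ‖Y ω‖ with hf
  have hmeas : AEStronglyMeasurable f μ :=
    (hYmeas.norm).aestronglyMeasurable
  have hmem : MemLp f 2 μ := (memLp_two_iff_integrable_sq hmeas).2 hYint
  -- Jensen/Cauchy-Schwarz: (∫ f)^2 ≤ ∫ f^2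
  have hvar := ProbabilityTheory.variance_nonneg f μ
  rw [ProbabilityTheory.variance_eq_sub hmem] at hvar
  simp only [Pi.pow_apply] at hvar
  have hI1sq : (∫ ω, f ω ∂μ) ^ 2 ≤ ∫ ω, f ω ^ 2 ∂μ := by linarith
  have hI1nonneg : 0 ≤ ∫ ω, f ω ∂μ :=
    integral_nonneg fun ω => norm_nonneg _
  -- ℓ² norm ≤ ℓ¹ norm
  have hq1 : ‖q‖ ≤ ∑ i, |q i| := by
    have h1 : ‖q‖ ^ 2 = ∑ i, q i ^ 2 := by
      rw [EuclideanSpace.norm_eq, Real.sq_sqrt]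
      · congr 1; ext i; rw [Real.norm_eq_abs, sq_abs]
      · exact Finset.sum_nonneg fun i _ => sq_nonneg _
    have h2 : ∑ i, q i ^ 2 ≤ (∑ i, |q i|) ^ 2 := by
      have := Finset.sum_sq_le_sq_sum_of_nonneg
        (s := Finset.univ) (f := fun i => |q i|) (fun i _ => abs_nonneg _)
      simpa [sq_abs] using this
    have h3 : ‖q‖ ^ 2 ≤ (∑ i, |q i|) ^ 2 := by linarith
    have h4 : 0 ≤ ∑ i, |q i| := Finset.sum_nonneg fun i _ => abs_nonneg _
    nlinarith [norm_nonneg q]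
  have hI2 : ∫ ω, f ω ^ 2 ∂μ ≤ ‖q‖ ^ 2 - 2 * β * ‖q‖ + 2 * C := by
    have : 2 * β * ‖q‖ ≤ 2 * β * ∑ i, |q i| := by nlinarith
    calc ∫ ω, f ω ^ 2 ∂μ ≤ ‖q‖ ^ 2 - 2 * β * (∑ i, |q i|) + 2 * C := hdrift
      _ ≤ ‖q‖ ^ 2 - 2 * β * ‖q‖ + 2 * C := by linarith
  set a := ‖q‖
  set c := C / θ with hc
  have hcθ : C = c * θ := by rw [hc, div_mul_cancel₀ C hθ.ne']
  have hcnn : 0 ≤ c := div_nonneg hC hθ.le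
  have hchain : (∫ ω, f ω ∂μ) ^ 2 ≤ a ^ 2 - 2 * β * a + 2 * c * a := by
    nlinarith
  have hRnn : 0 ≤ a - β + c := by nlinarith [sq_nonneg (∫ ω, f ω ∂μ), hθ]
  nlinarith [sq_nonneg (β - c), sq_nonneg ((∫ ω, f ω ∂μ) + (a - β + c))]
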